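/- arXiv:2311.12469 — 4 statements merged into one kernel-verified Lean document; each statement's English description precedes it below -/
import Mathlib

section
/- Let (𝔫, μ, ⟨·,·⟩) be a metric nilpotent Lie algebra with μ ≠ 0, let φ_μ be a pre-Einstein derivation of (𝔫, μ), and assume ⟨·,·⟩ is compatible with φ_μ. If (𝔫, μ, ⟨·,·⟩) is a nilsoliton, then there exists a ∈ ℝ such that Ric_μ = a·(id − φ_μ). -/
open scoped BigOperators RealInnerProductSpace

noncomputable section

variable {E : Type*} [NormedAddCommGroup E] [InnerProductSpace ℝ E] [FiniteDimensional ℝ E]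

/-- `μ` is a Lie bracket: alternating and satisfying the Jacobi identity. -/
def IsLieBracket (μ : E →ₗ[ℝ] E →ₗ[ℝ] E) : Prop :=
  (∀ X, μ X X = 0) ∧ ∀ X Y Z, μ X (μ Y Z) + μ Y (μ Z X) + μ Z (μ X Y) = 0

/-- `D` is a derivation of the bracket `μ`. -/
def IsDerivation (μ : E →ₗ[ℝ] E →ₗ[ℝ] E) (D : E →ₗ[ℝ] E) : Prop :=
  ∀ X Y, D (μ X Y) = μ (D X) Y + μ X (D Y)

/-- The bracket `μ` is nilpotent: all sufficiently long iterated brackets vanish. -/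
def IsNilpotentBracket (μ : E →ₗ[ℝ] E →ₗ[ℝ] E) : Prop :=
  ∃ k : ℕ, ∀ x : ℕ → E, (List.range k).foldr (fun i v => μ (x i) v) (x k) = 0

/-- `φ` is a pre-Einstein derivation of `μ`: a derivation, diagonalizable over `ℝ`,
with `tr(φ∘ψ) = tr(ψ)` for every derivation `ψ` of `μ`. -/
def IsPreEinstein (μ : E →ₗ[ℝ] E →ₗ[ℝ] E) (φ : E →ₗ[ℝ] E) : Prop :=
  IsDerivation μ φ ∧
  (∃ b : Module.Basis (Fin (Module.finrank ℝ E)) ℝ E, ∀ i, ∃ c : ℝ, φ (b i) = c • b i) ∧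
  ∀ ψ : E →ₗ[ℝ] E, IsDerivation μ ψ →
    LinearMap.trace ℝ E (φ ∘ₗ ψ) = LinearMap.trace ℝ E ψ

/-- The Ricci form of the metric Lie algebra `(E, μ, ⟪·,·⟫)`, computed in the
orthonormal basis `b`. -/
def ricci {n : ℕ} (b : OrthonormalBasis (Fin n) ℝ E) (μ : E →ₗ[ℝ] E →ₗ[ℝ] E)
    (X Y : E) : ℝ :=
  -(1/2) * ∑ i, ∑ j, ⟪μ X (b i), b j⟫ * ⟪μ Y (b i), b j⟫
    + (1/4) * ∑ i, ∑ j, ⟪μ (b i) (b j), X⟫ * ⟪μ (b i) (b j), Y⟫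

/-- `(E, μ, ⟪·,·⟫)` is a nilsoliton: the Ricci endomorphism equals `c·id + D`
for some `c ∈ ℝ` and some derivation `D` of `μ`. -/
def IsNilsoliton {n : ℕ} (b : OrthonormalBasis (Fin n) ℝ E)
    (μ : E →ₗ[ℝ] E →ₗ[ℝ] E) : Prop :=
  ∃ (Ric D : E →ₗ[ℝ] E) (c : ℝ),
    (∀ X Y, ⟪Ric X, Y⟫ = ricci b μ X Y) ∧ IsDerivation μ D ∧
      Ric = c • LinearMap.id + D

theorem ricci_proportional_of_isNilsoliton {n : ℕ} (hn : 1 ≤ n)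
    (b : OrthonormalBasis (Fin n) ℝ E) (μ : E →ₗ[ℝ] E →ₗ[ℝ] E)
    (hμ : IsLieBracket μ) (hnil : IsNilpotentBracket μ) (hne : μ ≠ 0)
    (φ : E →ₗ[ℝ] E) (hφ : IsPreEinstein μ φ) (hcompat : φ.IsSymmetric)
    (hsol : IsNilsoliton b μ) :
    ∀ Ric : E →ₗ[ℝ] E, (∀ X Y, ⟪Ric X, Y⟫ = ricci b μ X Y) →
      ∃ a : ℝ, Ric = a • (LinearMap.id - φ) := by
  intro Ric hRic
  obtain ⟨Ric0, D, c0, hRic0, hD, hEq0⟩ := hsol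
  have hRR : Ric = Ric0 := by
    ext X
    apply ext_inner_right ℝ
    intro Y
    rw [hRic, hRic0]
  have hEq : Ric = c0 • LinearMap.id + D := hRR.trans hEq0
  -- antisymmetry of the bracket
  have hanti : ∀ X Y : E, μ X Y = - μ Y X := by
    intro X Y
    have h := hμ.1 (X + Y)
    simp only [map_add, LinearMap.add_apply, hμ.1, zero_add, add_zero] at h
    exact eq_neg_of_add_eq_zero_right h
  -- trace via the orthonormal basis
  have htr : ∀ T : E →ₗ[ℝ] E, LinearMap.trace ℝ E T = ∑ i, ⟪T (b i), b i⟫ := by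
    intro T
    rw [LinearMap.trace_eq_matrix_trace ℝ b.toBasis, Matrix.trace]
    refine Finset.sum_congr rfl fun i _ => ?_
    rw [Matrix.diag_apply, LinearMap.toMatrix_apply, OrthonormalBasis.coe_toBasis,
      OrthonormalBasis.coe_toBasis_repr_apply, OrthonormalBasis.repr_apply_apply,
      real_inner_comm]
  -- key identity: the trace of Ric composed with any derivation vanishes
  have key : ∀ ψ : E →ₗ[ℝ] E, IsDerivation μ ψ →
      ∑ k, ricci b μ (ψ (b k)) (b k) = 0 := by
    intro ψ hψ
    have pars : ∀ u v : E, (∑ j, ⟪u, b j⟫ * ⟪v, b j⟫) = ⟪u, v⟫ := by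
      intro u v
      calc ∑ j, ⟪u, b j⟫ * ⟪v, b j⟫ = ∑ j, ⟪u, b j⟫ * ⟪b j, v⟫ := by
            simp_rw [real_inner_comm v]
        _ = ⟪u, v⟫ := b.sum_inner_mul_inner u v
    have innerψ : ∀ v : E, (∑ k, ⟪v, ψ (b k)⟫ * ⟪v, b k⟫) = ⟪v, ψ v⟫ := by
      intro v
      have hv : ψ v = ∑ k, ⟪b k, v⟫ • ψ (b k) := by
        conv_lhs => rw [← b.sum_repr' v]
        rw [map_sum]
        exact Finset.sum_congr rfl fun k _ => by rw [map_smul]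
      rw [hv, inner_sum]
      refine Finset.sum_congr rfl fun k _ => ?_
      rw [inner_smul_right, real_inner_comm (b k) v]
      ring
    have step1 : ∀ k, ricci b μ (ψ (b k)) (b k)
        = -(1/2) * (∑ i, ⟪μ (ψ (b k)) (b i), μ (b k) (b i)⟫)
          + (1/4) * ∑ i, ∑ j, ⟪μ (b i) (b j), ψ (b k)⟫ * ⟪μ (b i) (b j), b k⟫ := by
      intro k
      unfold ricci
      congr 2
      exact Finset.sum_congr rfl fun i _ => pars _ _
    have hsum : ∑ k, ricci b μ (ψ (b k)) (b k)
        = -(1/2) * (∑ k, ∑ i, ⟪μ (ψ (b k)) (b i), μ (b k) (b i)⟫)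
          + (1/4) * ∑ k, ∑ i, ∑ j, ⟪μ (b i) (b j), ψ (b k)⟫ * ⟪μ (b i) (b j), b k⟫ := by
      simp only [step1]
      rw [Finset.sum_add_distrib, ← Finset.mul_sum, ← Finset.mul_sum]
    have S2eq : (∑ k, ∑ i, ∑ j, ⟪μ (b i) (b j), ψ (b k)⟫ * ⟪μ (b i) (b j), b k⟫)
        = 2 * ∑ k, ∑ i, ⟪μ (ψ (b k)) (b i), μ (b k) (b i)⟫ := by
      rw [Finset.sum_comm]
      have h3 : ∀ i : Fin n, (∑ k, ∑ j, ⟪μ (b i) (b j), ψ (b k)⟫ * ⟪μ (b i) (b j), b k⟫)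
          = ∑ j, ⟪μ (b i) (b j), ψ (μ (b i) (b j))⟫ := by
        intro i
        rw [Finset.sum_comm]
        exact Finset.sum_congr rfl fun j _ => innerψ _
      have hψ' : ∀ X Y : E, ψ (μ X Y) = μ (ψ X) Y + μ X (ψ Y) := hψ
      simp only [h3, hψ', inner_add_right]
      simp only [Finset.sum_add_distrib]
      have T2 : (∑ i, ∑ j, ⟪μ (b i) (b j), μ (b i) (ψ (b j))⟫)
          = ∑ i, ∑ j, ⟪μ (b i) (b j), μ (ψ (b i)) (b j)⟫ := by
        rw [Finset.sum_comm]
        refine Finset.sum_congr rfl fun i _ => Finset.sum_congr rfl fun j _ => ?_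
        rw [hanti (b j) (b i), hanti (b j) (ψ (b i)), inner_neg_neg]
      have T1 : (∑ i, ∑ j, ⟪μ (b i) (b j), μ (ψ (b i)) (b j)⟫)
          = ∑ k, ∑ i, ⟪μ (ψ (b k)) (b i), μ (b k) (b i)⟫ := by
        refine Finset.sum_congr rfl fun i _ => Finset.sum_congr rfl fun j _ => ?_
        exact real_inner_comm _ _
      rw [T2, T1]
      ring
    rw [hsum, S2eq]
    ring
  have keytr : ∀ ψ : E →ₗ[ℝ] E, IsDerivation μ ψ →
      LinearMap.trace ℝ E (Ric ∘ₗ ψ) = 0 := by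
    intro ψ hψ
    rw [htr]
    simp only [LinearMap.comp_apply]
    exact (Finset.sum_congr rfl fun k _ => hRic _ _).trans (key ψ hψ)
  -- trace identities
  have e1 : c0 * LinearMap.trace ℝ E D + LinearMap.trace ℝ E (D ∘ₗ D) = 0 := by
    have h := keytr D hD
    rw [hEq, LinearMap.add_comp, LinearMap.smul_comp, LinearMap.id_comp, map_add,
      map_smul, smul_eq_mul] at h
    exact h
  have e2 : c0 * LinearMap.trace ℝ E φ + LinearMap.trace ℝ E (D ∘ₗ φ) = 0 := by
    have h := keytr φ hφ.1
    rw [hEq, LinearMap.add_comp, LinearMap.smul_comp, LinearMap.id_comp, map_add,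
      map_smul, smul_eq_mul] at h
    exact h
  have e3 : LinearMap.trace ℝ E (D ∘ₗ φ) = LinearMap.trace ℝ E D := by
    rw [LinearMap.trace_comp_comm']
    exact hφ.2.2 D hD
  have e4 : LinearMap.trace ℝ E (φ ∘ₗ φ) = LinearMap.trace ℝ E φ := hφ.2.2 φ hφ.1
  have e3' : LinearMap.trace ℝ E (φ ∘ₗ D) = LinearMap.trace ℝ E D := hφ.2.2 D hD
  set χ : E →ₗ[ℝ] E := D + c0 • φ with hχdef
  have e5 : LinearMap.trace ℝ E (χ ∘ₗ χ) = LinearMap.trace ℝ E (D ∘ₗ D)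
      + c0 * LinearMap.trace ℝ E (D ∘ₗ φ) + c0 * LinearMap.trace ℝ E (φ ∘ₗ D)
      + c0 ^ 2 * LinearMap.trace ℝ E (φ ∘ₗ φ) := by
    simp only [hχdef, LinearMap.add_comp, LinearMap.comp_add, LinearMap.smul_comp,
      LinearMap.comp_smul, map_add, map_smul, smul_eq_mul]
    ring
  have e6 : LinearMap.trace ℝ E (χ ∘ₗ χ) = 0 := by
    rw [e5, e3, e3', e4]
    rw [e3] at e2
    linear_combination e1 + c0 * e2
  -- symmetry of Ric, hence of χ
  have hrs : ∀ X Y : E, ricci b μ X Y = ricci b μ Y X := by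
    intro X Y
    unfold ricci
    have A : (∑ i, ∑ j, ⟪μ X (b i), b j⟫ * ⟪μ Y (b i), b j⟫)
        = ∑ i, ∑ j, ⟪μ Y (b i), b j⟫ * ⟪μ X (b i), b j⟫ :=
      Finset.sum_congr rfl fun i _ => Finset.sum_congr rfl fun j _ => mul_comm _ _
    have B : (∑ i, ∑ j, ⟪μ (b i) (b j), X⟫ * ⟪μ (b i) (b j), Y⟫)
        = ∑ i, ∑ j, ⟪μ (b i) (b j), Y⟫ * ⟪μ (b i) (b j), X⟫ :=
      Finset.sum_congr rfl fun i _ => Finset.sum_congr rfl fun j _ => mul_comm _ _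
    rw [A, B]
  have hRicsym : ∀ X Y : E, ⟪Ric X, Y⟫ = ⟪X, Ric Y⟫ := by
    intro X Y
    rw [hRic, hrs, ← hRic]
    exact real_inner_comm _ _
  have hDdef : ∀ Z : E, D Z = Ric Z - c0 • Z := by
    intro Z
    have h := congrFun (congrArg (fun f : E →ₗ[ℝ] E => (f : E → E)) hEq) Z
    simp only [LinearMap.add_apply, LinearMap.smul_apply, LinearMap.id_apply] at h
    rw [h]
    abel
  have hχsym : ∀ X Y : E, ⟪χ X, Y⟫ = ⟪X, χ Y⟫ := by
    intro X Y
    simp only [hχdef, LinearMap.add_apply, LinearMap.smul_apply, hDdef,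
      inner_add_left, inner_add_right, inner_sub_left, inner_sub_right,
      real_inner_smul_left, real_inner_smul_right]
    have h1 := hRicsym X Y
    have h2 := hcompat X Y
    linear_combination h1 + c0 * h2
  -- χ = 0
  have hzero : ∀ i, χ (b i) = 0 := by
    have hsum0 : ∑ i, ⟪χ (b i), χ (b i)⟫ = 0 := by
      rw [← e6, htr]
      simp only [LinearMap.comp_apply]
      exact Finset.sum_congr rfl fun i _ => (hχsym (χ (b i)) (b i)).symm ▸
        (hχsym (χ (b i)) (b i))
    intro i
    have h := (Finset.sum_eq_zero_iff_of_nonneg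
      (fun j _ => real_inner_self_nonneg)).1 hsum0 i (Finset.mem_univ i)
    exact inner_self_eq_zero.1 h
  have hχ0 : χ = 0 := by
    apply b.toBasis.ext
    intro i
    rw [OrthonormalBasis.coe_toBasis]
    simp [hzero i]
  have hDφ : D = -(c0 • φ) := eq_neg_of_add_eq_zero_left hχ0
  refine ⟨c0, ?_⟩
  rw [hEq, hDφ, smul_sub]
  abel


end
end

section
/- Let (𝔫, μ, ⟨·,·⟩) be a metric nilpotent Lie algebra with μ ≠ 0, whose inner product is compatible with a pre-Einstein derivation φ_μ, and let B = {e_i} be an orthonormal basis of 𝔫 consisting of eigenvectors of φ_μ. Let 𝔭_B be the set of endomorphisms of 𝔫 that are diagonal with respect to B, say λ = diag(λ_1,…,λ_n), and satisfy tr((id − φ_μ)∘λ) = 0. Then ν(λ;μ) := −min{ λ_i + λ_j − λ_k : 1 ≤ i < j ≤ n, 1 ≤ k ≤ n, μ^k_{ij} ≠ 0 } > 0 for every λ ∈ 𝔭_B ∖ Der(μ) if and only if P₀ lies in the intrinsic interior (the interior within the affine span L_B) of the convex hull of F_B. -/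
open scoped BigOperators RealInnerProductSpace

noncomputable section

variable {E : Type*} [NormedAddCommGroup E] [InnerProductSpace ℝ E] [FiniteDimensional ℝ E]

/-- The Hilbert--Mumford weight `ν(λ;μ)` of a diagonal endomorphism with eigenvalues `l`
in the orthonormal basis `b`, relative to the bracket `μ`. -/
def nu {n : ℕ} (b : OrthonormalBasis (Fin n) ℝ E) (l : Fin n → ℝ)
    (μ : E →ₗ[ℝ] E →ₗ[ℝ] E) : ℝ :=
  -sInf {x : ℝ | ∃ i j k : Fin n, i < j ∧ ⟪μ (b i) (b j), b k⟫ ≠ 0 ∧ x = l i + l j - l k}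

/-- The finite subset `F_B = { e_i + e_j - e_k : i < j, μ^k_{ij} ≠ 0 }` of `E`. -/
def FB {n : ℕ} (b : OrthonormalBasis (Fin n) ℝ E) (μ : E →ₗ[ℝ] E →ₗ[ℝ] E) : Set E :=
  {x : E | ∃ i j k : Fin n, i < j ∧ ⟪μ (b i) (b j), b k⟫ ≠ 0 ∧ x = b i + b j - b k}

section Geo
variable {W : Type*} [NormedAddCommGroup W] [InnerProductSpace ℝ W] [FiniteDimensional ℝ W]

lemma geo_core (G : Set W) (hGfin : G.Finite) (hGne : G.Nonempty)
    (hspan : affineSpan ℝ G = ⊤) :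
    (∀ d : W, d ≠ 0 → ∃ g ∈ G, ⟪d, g⟫ < 0) ↔ (0 : W) ∈ interior (convexHull ℝ G) := by
  constructor
  · intro h
    by_contra h0
    -- pick a separating functional
    have hconv : Convex ℝ (convexHull ℝ G) := convex_convexHull ℝ G
    have hclosed : IsClosed (convexHull ℝ G) :=
      (hGfin.isCompact_convexHull (𝕜 := ℝ)).isClosed
    have hint : (interior (convexHull ℝ G)).Nonempty := by
      rw [hconv.interior_nonempty_iff_affineSpan_eq_top, affineSpan_convexHull]
      exact hspan
    obtain ⟨f, hf⟩ := geometric_hahn_banach_open_point (hconv.interior) isOpen_interior h0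
    obtain ⟨a, ha⟩ := hint
    have hfa : f a < 0 := by have := hf a ha; simpa using this
    have hfle : ∀ g ∈ G, f g ≤ 0 := by
      intro g hg
      by_contra hpos
      push_neg at hpos
      set c : ℝ := -f a with hc
      have hcpos : 0 < c := by simp [hc]; linarith
      set t : ℝ := (c + f g / 2) / (c + f g) with ht
      have hden : 0 < c + f g := by linarith
      have ht0 : 0 ≤ t := by positivity
      have h1t : 0 < 1 - t := by
        rw [ht, sub_pos, div_lt_one hden]; linarith
      have hw : (1 - t) • a + t • g ∈ interior (convexHull ℝ G) :=
        hconv.combo_interior_closure_mem_interior ha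
          (subset_closure (subset_convexHull ℝ G hg)) h1t ht0 (by ring)
      have hfw := hf _ hw
      simp only [map_add, map_smul, map_zero, smul_eq_mul] at hfw
      have hteq : t * (c + f g) = c + f g / 2 := by
        rw [ht]; field_simp
      nlinarith
    have hfne : f ≠ 0 := by
      intro hf0
      rw [hf0] at hfa
      simp at hfa
    set y : W := (InnerProductSpace.toDual ℝ W).symm f with hy
    have hyx : ∀ x : W, ⟪y, x⟫ = f x := fun x =>
      InnerProductSpace.toDual_symm_apply
    have hyne : (-y) ≠ 0 := by
      simp only [ne_eq, neg_eq_zero]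
      intro h'
      apply hfne
      ext x
      have := hyx x
      rw [h'] at this
      simpa using this.symm
    obtain ⟨g, hg, hglt⟩ := h (-y) hyne
    rw [inner_neg_left, hyx] at hglt
    have := hfle g hg
    linarith
  · intro h0 d hd
    have hmem : convexHull ℝ G ∈ nhds (0 : W) := mem_interior_iff_mem_nhds.mp h0
    obtain ⟨ε, hε, hball⟩ := Metric.mem_nhds_iff.mp hmem
    by_contra hno
    push_neg at hno
    have hK : convexHull ℝ G ⊆ {x | 0 ≤ ⟪d, x⟫} := by
      apply convexHull_min
      · intro g hg; exact hno g hg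
      · exact convex_halfSpace_ge
          ⟨fun x y => inner_add_right d x y, fun c x => real_inner_smul_right d x c⟩ 0
    have hdpos : (0:ℝ) < ‖d‖ := norm_pos_iff.mpr hd
    set z : W := -((ε / (2 * ‖d‖)) • d) with hz
    have hzball : z ∈ Metric.ball (0:W) ε := by
      simp only [Metric.mem_ball, dist_zero_right, hz, norm_neg, norm_smul,
        Real.norm_eq_abs]
      rw [abs_of_pos (by positivity)]
      rw [div_mul_eq_mul_div, mul_comm]
      calc ‖d‖ * ε / (2 * ‖d‖) = ε / 2 := by field_simp
        _ < ε := by linarith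
    have hzK := hK (hball hzball)
    simp only [Set.mem_setOf_eq, hz, inner_neg_right, real_inner_smul_right] at hzK
    have : (0:ℝ) < ε / (2 * ‖d‖) * (‖d‖ * ‖d‖) := by
      have := real_inner_self_eq_norm_mul_norm d
      positivity
    rw [real_inner_self_eq_norm_mul_norm] at hzK
    linarith

lemma intrinsic_top {s : Set W} (h : affineSpan ℝ s = ⊤) :
    intrinsicInterior ℝ s = interior s := by
  apply Set.Subset.antisymm
  · rintro x hx
    rw [mem_intrinsicInterior] at hx
    obtain ⟨y, hy, rfl⟩ := hx
    have hopen : IsOpen ((affineSpan ℝ s : Set W)) := by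
      rw [h, AffineSubspace.top_coe]; exact isOpen_univ
    have hmap : IsOpenMap ((↑) : (affineSpan ℝ s : Set W) → W) :=
      hopen.isOpenMap_subtype_val
    have himg : IsOpen (Subtype.val '' interior (Subtype.val ⁻¹' s : Set (affineSpan ℝ s))) :=
      hmap _ isOpen_interior
    have hsub : Subtype.val '' interior (Subtype.val ⁻¹' s : Set (affineSpan ℝ s)) ⊆ s := by
      rintro _ ⟨z, hz, rfl⟩
      have hz' : z ∈ (Subtype.val ⁻¹' s : Set (affineSpan ℝ s)) := interior_subset hz
      exact hz'
    exact interior_maximal hsub himg ⟨y, hy, rfl⟩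
  · exact interior_subset_intrinsicInterior

lemma geo_main {F : Set W} (hfin : F.Finite) (hne : F.Nonempty) {p : W}
    (hp : p ∈ affineSpan ℝ F) (hp' : ∀ w ∈ affineSpan ℝ F, ⟪p, w - p⟫ = 0) :
    (∀ v : W, ⟪v, p⟫ = 0 → (∃ f ∈ F, ⟪v, f⟫ ≠ 0) → ∃ f ∈ F, ⟪v, f⟫ < 0) ↔
      p ∈ intrinsicInterior ℝ (convexHull ℝ F) := by
  set A := affineSpan ℝ F with hA
  set V := A.direction with hV
  have hFA : F ⊆ (A : Set W) := subset_affineSpan ℝ F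
  have hpV : ∀ w ∈ V, ⟪p, w⟫ = 0 := by
    intro w hw
    rw [AffineSubspace.mem_direction_iff_eq_vsub ⟨p, hp⟩] at hw
    obtain ⟨a, ha, c, hc, rfl⟩ := hw
    have h1 := hp' a ha
    have h2 := hp' c hc
    rw [vsub_eq_sub, show a - c = (a - p) - (c - p) by abel, inner_sub_right, h1, h2, sub_zero]
  have hsubV : ∀ f ∈ F, f - p ∈ V := fun f hf => by
    simpa [vsub_eq_sub] using AffineSubspace.vsub_mem_direction (hFA hf) hp
  set G : Set V := {g : V | (g : W) + p ∈ F} with hG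
  -- the affine isometry v ↦ p + v
  set ι : V →ᵃⁱ[ℝ] W :=
    (AffineIsometryEquiv.constVAdd ℝ W p).toAffineIsometry.comp
      V.subtypeₗᵢ.toAffineIsometry with hι
  have hιapp : ∀ g : V, ι g = p + (g : W) := fun g => rfl
  have hιG : ι '' G = F := by
    ext f
    constructor
    · rintro ⟨g, hg, rfl⟩
      rw [hιapp, add_comm]
      exact hg
    · intro hf
      refine ⟨⟨f - p, hsubV f hf⟩, by simpa [hG] using hf, ?_⟩
      rw [hιapp]
      show p + (f - p) = f
      abel
  have hGne : G.Nonempty := by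
    obtain ⟨f, hf⟩ := hne
    exact ⟨⟨f - p, hsubV f hf⟩, by simpa [hG] using hf⟩
  have hGfin : G.Finite := by
    exact Set.Finite.of_finite_image (hιG ▸ hfin) ι.injective.injOn
  have hGspan : affineSpan ℝ G = ⊤ := by
    rw [AffineSubspace.affineSpan_eq_top_iff_vectorSpan_eq_top_of_nonempty ℝ ↥V ↥V hGne]
    have hmap : Submodule.map V.subtype (vectorSpan ℝ G) = V := by
      rw [vectorSpan_def, Submodule.map_span]
      have himg : V.subtype '' (G -ᵥ G) = F -ᵥ F := by
        ext x
        simp only [Set.mem_image, Set.mem_vsub]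
        constructor
        · rintro ⟨y, ⟨g₁, hg₁, g₂, hg₂, rfl⟩, rfl⟩
          refine ⟨(g₁ : W) + p, hg₁, (g₂ : W) + p, hg₂, ?_⟩
          show ((g₁ : W) + p) -ᵥ ((g₂ : W) + p) = V.subtype (g₁ -ᵥ g₂)
          simp only [vsub_eq_sub, Submodule.coe_subtype, AddSubgroupClass.coe_sub]
          abel
        · rintro ⟨f₁, hf₁, f₂, hf₂, rfl⟩
          refine ⟨(⟨f₁ - p, hsubV f₁ hf₁⟩ : V) -ᵥ (⟨f₂ - p, hsubV f₂ hf₂⟩ : V),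
            ⟨⟨f₁ - p, hsubV f₁ hf₁⟩, by simpa [hG] using hf₁,
             ⟨f₂ - p, hsubV f₂ hf₂⟩, by simpa [hG] using hf₂, rfl⟩, ?_⟩
          show V.subtype ((⟨f₁ - p, hsubV f₁ hf₁⟩ : V) -ᵥ (⟨f₂ - p, hsubV f₂ hf₂⟩ : V)) = f₁ -ᵥ f₂
          simp only [vsub_eq_sub, Submodule.coe_subtype, AddSubgroupClass.coe_sub]
          abel
      rw [himg, ← vectorSpan_def, ← direction_affineSpan, ← hA, ← hV]
    have htop : Submodule.map V.subtype (⊤ : Submodule ℝ V) = V := Submodule.map_subtype_top V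
    exact Submodule.map_injective_of_injective V.injective_subtype (by rw [hmap, htop])
  have hmemiff : (p ∈ intrinsicInterior ℝ (convexHull ℝ F)) ↔
      (0 : V) ∈ interior (convexHull ℝ G) := by
    rw [← hιG, show convexHull ℝ (⇑ι '' G) = ι '' convexHull ℝ G by
        rw [← ι.coe_toAffineMap, AffineMap.image_convexHull],
      AffineIsometry.image_intrinsicInterior,
      intrinsic_top (by rw [affineSpan_convexHull]; exact hGspan)]
    constructor
    · rintro ⟨g, hg, hgp⟩
      have : g = 0 := by
        apply ι.injective
        rw [hgp, hιapp]
        simp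
      exact this ▸ hg
    · intro h0
      exact ⟨0, h0, by rw [hιapp]; simp⟩
  rw [hmemiff, ← geo_core G hGfin hGne hGspan]
  constructor
  · intro h d hd
    have hdp : ⟪(d : W), p⟫ = 0 := by
      rw [real_inner_comm]; exact hpV _ d.2
    have hdf : ∃ f ∈ F, ⟪(d : W), f⟫ ≠ 0 := by
      by_contra hall
      push_neg at hall
      have : ∀ w ∈ V, ⟪(d : W), w⟫ = 0 := by
        intro w hw
        rw [hV, direction_affineSpan, vectorSpan_def] at hw
        induction hw using Submodule.span_induction with
        | mem x hx =>
          obtain ⟨f₁, hf₁, f₂, hf₂, rfl⟩ := hx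
          show ⟪(d : W), f₁ -ᵥ f₂⟫ = 0
          rw [vsub_eq_sub, inner_sub_right, hall f₁ hf₁, hall f₂ hf₂, sub_zero]
        | zero => exact inner_zero_right _
        | add x y _ _ hx hy => rw [inner_add_right, hx, hy, add_zero]
        | smul c x _ hx => rw [real_inner_smul_right, hx, mul_zero]
      have hd0 : (d : W) = 0 := inner_self_eq_zero.mp (this _ d.2)
      exact hd (Subtype.coe_injective (by simpa using hd0))
    obtain ⟨f, hf, hflt⟩ := h (d : W) hdp hdf
    refine ⟨⟨f - p, hsubV f hf⟩, by simpa [hG] using hf, ?_⟩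
    rw [Submodule.coe_inner]
    simp only
    rw [inner_sub_right, hdp, sub_zero]
    exact hflt
  · intro h v hvp hvne
    set d : V := V.orthogonalProjectionOnto v with hd
    have hproj : ∀ w ∈ V, ⟪v, w⟫ = ⟪(d : W), w⟫ := by
      intro w hw
      have := Submodule.starProjection_inner_eq_zero (K := V) v w hw
      have h2 : ⟪v - (d : W), w⟫ = 0 := this
      rw [inner_sub_left] at h2
      linarith
    have hvf : ∀ f ∈ F, ⟪v, f⟫ = ⟪(d : W), f - p⟫ := by
      intro f hf
      have : ⟪v, f⟫ = ⟪v, f - p⟫ := by rw [inner_sub_right, hvp, sub_zero]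
      rw [this, hproj _ (hsubV f hf)]
    have hdne : d ≠ 0 := by
      intro hd0
      obtain ⟨f, hf, hfne⟩ := hvne
      apply hfne
      rw [hvf f hf, hd0]
      simp
    obtain ⟨g, hg, hglt⟩ := h d hdne
    refine ⟨(g : W) + p, hg, ?_⟩
    have h1 : ((g : W) + p) ∈ F := hg
    rw [hvf _ h1, show (g : W) + p - p = (g : W) by abel]
    rw [Submodule.coe_inner] at hglt
    exact hglt

end Geo


lemma coord {n : ℕ} (b : OrthonormalBasis (Fin n) ℝ E) (c : Fin n → ℝ) (t : Fin n) :
    ⟪b t, ∑ i, c i • b i⟫ = c t := b.orthonormal.inner_right_fintype c t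

lemma diag_inner {n : ℕ} (b : OrthonormalBasis (Fin n) ℝ E) {lam : E →ₗ[ℝ] E} {l : Fin n → ℝ}
    (hl : ∀ i, lam (b i) = l i • b i) (v : E) (k : Fin n) :
    ⟪b k, lam v⟫ = l k * ⟪b k, v⟫ := by
  conv_lhs => rw [← b.sum_repr v]
  rw [map_sum]
  simp_rw [map_smul, hl, smul_smul]
  rw [coord, b.repr_apply_apply]
  ring

lemma trace_diag {n : ℕ} (b : OrthonormalBasis (Fin n) ℝ E) (T : E →ₗ[ℝ] E) (c : Fin n → ℝ)
    (h : ∀ i, T (b i) = c i • b i) : LinearMap.trace ℝ E T = ∑ i, c i := by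
  rw [LinearMap.trace_eq_matrix_trace ℝ b.toBasis, Matrix.trace]
  apply Finset.sum_congr rfl
  intro i _
  rw [Matrix.diag_apply, LinearMap.toMatrix_apply]
  rw [OrthonormalBasis.coe_toBasis, h i, map_smul]
  have : b.toBasis.repr (b i) = Finsupp.single i 1 := by
    rw [← OrthonormalBasis.coe_toBasis b]
    exact b.toBasis.repr_self i
  rw [this]
  simp

lemma der_iff {n : ℕ} (μ : E →ₗ[ℝ] E →ₗ[ℝ] E) (hμ : IsLieBracket μ)
    (b : OrthonormalBasis (Fin n) ℝ E) {lam : E →ₗ[ℝ] E} {l : Fin n → ℝ}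
    (hl : ∀ i, lam (b i) = l i • b i) :
    IsDerivation μ lam ↔ ∀ i j k, ⟪μ (b i) (b j), b k⟫ ≠ 0 → l i + l j = l k := by
  constructor
  · intro hD i j k hne
    have heq := hD (b i) (b j)
    rw [hl i, hl j] at heq
    simp only [map_smul, LinearMap.map_smul₂, LinearMap.smul_apply] at heq
    have hin := congrArg (fun w => ⟪b k, w⟫) heq
    simp only [inner_add_right, real_inner_smul_right] at hin
    rw [diag_inner b hl] at hin
    have hc : ⟪b k, μ (b i) (b j)⟫ ≠ 0 := by
      rw [real_inner_comm]; exact hne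
    have h2 : (l i + l j) * ⟪b k, μ (b i) (b j)⟫ = l k * ⟪b k, μ (b i) (b j)⟫ := by
      rw [add_mul]; linarith [hin]
    exact mul_right_cancel₀ hc h2
  · intro hrel
    have hmaps : μ.compr₂ lam = μ.comp lam + μ.compl₂ lam := by
      apply Module.Basis.ext b.toBasis
      intro i
      apply Module.Basis.ext b.toBasis
      intro j
      simp only [OrthonormalBasis.coe_toBasis, LinearMap.compr₂_apply, LinearMap.add_apply,
        LinearMap.comp_apply, LinearMap.compl₂_apply]
      rw [hl i, hl j]
      simp only [map_smul, LinearMap.map_smul₂, LinearMap.smul_apply]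
      apply b.repr.injective
      ext k
      rw [b.repr_apply_apply, b.repr_apply_apply]
      rw [diag_inner b hl]
      rw [inner_add_right, real_inner_smul_right, real_inner_smul_right]
      by_cases hc : ⟪b k, μ (b i) (b j)⟫ = 0
      · rw [hc]; ring
      · have := hrel i j k (by rw [real_inner_comm] at hc; exact hc)
        rw [← this]; ring
    intro X Y
    have := LinearMap.congr_fun (LinearMap.congr_fun hmaps X) Y
    simpa only [LinearMap.compr₂_apply, LinearMap.add_apply, LinearMap.comp_apply,
      LinearMap.compl₂_apply] using this

theorem hmWeight_pos_iff_proj_mem_intrinsicInterior {n : ℕ} (hn : 1 ≤ n)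
    (μ : E →ₗ[ℝ] E →ₗ[ℝ] E) (hμ : IsLieBracket μ) (hnil : IsNilpotentBracket μ)
    (hne : μ ≠ 0) (φ : E →ₗ[ℝ] E) (hφ : IsPreEinstein μ φ) (hcompat : φ.IsSymmetric)
    (b : OrthonormalBasis (Fin n) ℝ E) (s : Fin n → ℝ) (hb : ∀ i, φ (b i) = s i • b i)
    (P₀ : E) (hP₀ : P₀ ∈ affineSpan ℝ (FB b μ))
    (hP₀' : ∀ w ∈ affineSpan ℝ (FB b μ), ⟪P₀, w - P₀⟫ = 0) :
    (∀ (lam : E →ₗ[ℝ] E) (l : Fin n → ℝ), (∀ i, lam (b i) = l i • b i) →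
      LinearMap.trace ℝ E ((LinearMap.id - φ) ∘ₗ lam) = 0 → ¬ IsDerivation μ lam →
      0 < nu b l μ) ↔
    P₀ ∈ intrinsicInterior ℝ (convexHull ℝ (FB b μ)) := by

  classical
  obtain ⟨hderφ, hdiagφ, htrφ⟩ := hφ
  have hsym : ∀ X Y : E, μ X Y = - μ Y X := by
    intro X Y
    have h := hμ.1 (X + Y)
    simp only [map_add, LinearMap.add_apply, hμ.1 X, hμ.1 Y, zero_add, add_zero] at h
    exact eq_neg_of_add_eq_zero_right h
  -- F is nonempty
  have hFne : (FB b μ).Nonempty := by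
    have hijne : ∃ i j, μ (b i) (b j) ≠ 0 := by
      by_contra hc
      push_neg at hc
      apply hne
      apply Module.Basis.ext b.toBasis
      intro i
      apply Module.Basis.ext b.toBasis
      intro j
      simp only [OrthonormalBasis.coe_toBasis, LinearMap.zero_apply]
      exact hc i j
    obtain ⟨i, j, hij⟩ := hijne
    have hije : i ≠ j := by rintro rfl; exact hij (hμ.1 (b i))
    have hlt : ∃ i j, i < j ∧ μ (b i) (b j) ≠ 0 := by
      rcases lt_or_gt_of_ne hije with h | h
      · exact ⟨i, j, h, hij⟩
      · refine ⟨j, i, h, ?_⟩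
        rw [hsym]
        simpa using hij
    obtain ⟨i', j', hij_lt, hijne'⟩ := hlt
    have hk : ∃ k, ⟪μ (b i') (b j'), b k⟫ ≠ 0 := by
      by_contra hc
      push_neg at hc
      apply hijne'
      apply b.repr.injective
      rw [map_zero]
      ext k
      rw [b.repr_apply_apply, real_inner_comm]
      simpa using hc k
    obtain ⟨k, hk⟩ := hk
    exact ⟨_, i', j', k, hij_lt, hk, rfl⟩
  -- F is finite
  have hFfin : (FB b μ).Finite := by
    apply Set.Finite.subset
      (Set.finite_range fun t : Fin n × Fin n × Fin n => b t.1 + b t.2.1 - b t.2.2)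
    rintro x ⟨i, j, k, _, _, rfl⟩
    exact ⟨(i, j, k), rfl⟩
  -- the vector u
  set u : E := ∑ i, (1 - s i) • b i with hu
  have hub : ∀ t, ⟪b t, u⟫ = 1 - s t := fun t => coord b _ t
  have hub' : ∀ t, ⟪u, b t⟫ = 1 - s t := fun t => by rw [real_inner_comm]; exact hub t
  have hsk : ∀ i j k, ⟪μ (b i) (b j), b k⟫ ≠ 0 → s k = s i + s j := by
    intro i j k hc
    have heq := hderφ (b i) (b j)
    rw [hb i, hb j] at heq
    simp only [map_smul, LinearMap.map_smul₂, LinearMap.smul_apply] at heq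
    have h2 : ⟪μ (b i) (b j), φ (b k)⟫ = ⟪φ (μ (b i) (b j)), b k⟫ := (hcompat _ _).symm
    rw [hb k, heq] at h2
    simp only [real_inner_smul_right, inner_add_left, real_inner_smul_left] at h2
    have h3 : s k * ⟪μ (b i) (b j), b k⟫ = (s i + s j) * ⟪μ (b i) (b j), b k⟫ := by
      rw [add_mul]; linarith
    exact mul_right_cancel₀ hc h3
  have huf : ∀ f ∈ FB b μ, ⟪u, f⟫ = 1 := by
    rintro f ⟨i, j, k, hij, hcoef, rfl⟩
    rw [inner_sub_right, inner_add_right, hub' i, hub' j, hub' k]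
    have := hsk i j k hcoef
    linarith
  -- swapping indices
  have hswap : ∀ i j k, ⟪μ (b i) (b j), b k⟫ ≠ 0 →
      ∃ i' j', i' < j' ∧ ⟪μ (b i') (b j'), b k⟫ ≠ 0 ∧
        (b i' + b j' - b k ∈ FB b μ) ∧ ∀ l : Fin n → ℝ, l i' + l j' = l i + l j := by
    intro i j k hc
    rcases lt_trichotomy i j with h | h | h
    · exact ⟨i, j, h, hc, ⟨i, j, k, h, hc, rfl⟩, fun l => rfl⟩
    · subst h
      exfalso
      apply hc
      rw [hμ.1 (b i)]
      exact inner_zero_left _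
    · have hc' : ⟪μ (b j) (b i), b k⟫ ≠ 0 := by
        rw [hsym (b j) (b i), inner_neg_left]
        simpa using hc
      exact ⟨j, i, h, hc', ⟨j, i, k, h, hc', rfl⟩, fun l => add_comm _ _⟩
  -- u lies in the linear span of F
  have hu_span : u ∈ Submodule.span ℝ (FB b μ) := by
    set Ws := Submodule.span ℝ (FB b μ) with hWs
    have hdec : u - (Ws.orthogonalProjectionOnto u : E) ∈ Wsᗮ :=
      Submodule.sub_starProjection_mem_orthogonal (K := Ws) u
    set u₂ : E := u - (Ws.orthogonalProjectionOnto u : E) with hu₂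
    set w : Fin n → ℝ := fun i => ⟪b i, u₂⟫ with hw
    have hu₂F : ∀ f ∈ FB b μ, ⟪u₂, f⟫ = 0 := by
      intro f hf
      rw [real_inner_comm]
      exact (Submodule.mem_orthogonal _ _).1 hdec f (Submodule.subset_span hf)
    set ψ : E →ₗ[ℝ] E := b.toBasis.constr ℝ (fun i => w i • b i) with hψ
    have hψb : ∀ i, ψ (b i) = w i • b i := by
      intro i
      have := b.toBasis.constr_basis ℝ (fun i => w i • b i) i
      rwa [OrthonormalBasis.coe_toBasis] at this
    have hψder : IsDerivation μ ψ := by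
      rw [der_iff μ hμ b hψb]
      intro i j k hc
      obtain ⟨i', j', hij', hc', hfF, hsum⟩ := hswap i j k hc
      have h0 := hu₂F _ hfF
      rw [inner_sub_right, inner_add_right] at h0
      have e1 : ⟪u₂, b i'⟫ = w i' := by rw [hw]; exact real_inner_comm _ _
      have e2 : ⟪u₂, b j'⟫ = w j' := by rw [hw]; exact real_inner_comm _ _
      have e3 : ⟪u₂, b k⟫ = w k := by rw [hw]; exact real_inner_comm _ _
      rw [e1, e2, e3] at h0
      have := hsum w
      linarith
    have htr1 := htrφ ψ hψder
    have htrψ : LinearMap.trace ℝ E ψ = ∑ i, w i := trace_diag b ψ w hψb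
    have htrφψ : LinearMap.trace ℝ E (φ ∘ₗ ψ) = ∑ i, s i * w i := by
      apply trace_diag b
      intro i
      rw [LinearMap.comp_apply, hψb, map_smul, hb i, smul_smul, mul_comm]
    have hsum0 : ∑ i, (1 - s i) * w i = 0 := by
      have : ∑ i, (1 - s i) * w i = (∑ i, w i) - ∑ i, s i * w i := by
        rw [← Finset.sum_sub_distrib]
        apply Finset.sum_congr rfl
        intro i _
        ring
      rw [this, ← htrψ, ← htrφψ, htr1, sub_self]
    have hinner : ⟪u, u₂⟫ = 0 := by
      rw [hu, sum_inner]
      rw [← hsum0]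
      apply Finset.sum_congr rfl
      intro i _
      rw [real_inner_smul_left, hw]
    have hp2 : ⟪(Ws.orthogonalProjectionOnto u : E), u₂⟫ = 0 :=
      (Submodule.mem_orthogonal _ _).1 hdec _ (Ws.orthogonalProjectionOnto u).2
    have hzero : ⟪u₂, u₂⟫ = 0 := by
      rw [hu₂, inner_sub_left, hinner, hp2, sub_zero]
    have hu₂0 : u₂ = 0 := inner_self_eq_zero.mp hzero
    have : u = (Ws.orthogonalProjectionOnto u : E) := by
      rw [hu₂, sub_eq_zero] at hu₂0
      exact hu₂0
    rw [this]
    exact (Ws.orthogonalProjectionOnto u).2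
  -- inner products with P₀
  have huP : ⟪u, P₀⟫ = 1 := by
    set S : AffineSubspace ℝ E :=
      { carrier := {x | ⟪u, x⟫ = 1}
        smul_vsub_vadd_mem' := by
          intro c p1 p2 p3 h1 h2 h3
          simp only [Set.mem_setOf_eq] at h1 h2 h3 ⊢
          rw [vadd_eq_add, vsub_eq_sub, inner_add_right, real_inner_smul_right,
            inner_sub_right, h1, h2, h3]
          ring } with hS
    have hle : affineSpan ℝ (FB b μ) ≤ S := by
      rw [affineSpan_le]
      intro f hf
      exact huf f hf
    exact hle hP₀
  have hP₀span : P₀ ∈ Submodule.span ℝ (FB b μ) := by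
    have hle : affineSpan ℝ (FB b μ) ≤ (Submodule.span ℝ (FB b μ)).toAffineSubspace := by
      rw [affineSpan_le]
      intro f hf
      exact Submodule.mem_toAffineSubspace.mpr (Submodule.subset_span hf)
    exact Submodule.mem_toAffineSubspace.mp (hle hP₀)
  have hP₀ne : P₀ ≠ 0 := by
    intro h
    rw [h, inner_zero_right] at huP
    exact one_ne_zero huP.symm
  have hPP : (0:ℝ) < ⟪P₀, P₀⟫ := by
    rw [real_inner_self_eq_norm_mul_norm]
    have : (0:ℝ) < ‖P₀‖ := norm_pos_iff.mpr hP₀ne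
    positivity
  -- u = ⟪P₀,P₀⟫⁻¹ • P₀
  have hueq : u = (⟪P₀, P₀⟫)⁻¹ • P₀ := by
    set d : E := u - (⟪P₀, P₀⟫)⁻¹ • P₀ with hD
    have hdF : ∀ f ∈ FB b μ, ⟪d, f⟫ = 0 := by
      intro f hf
      rw [hD, inner_sub_left, real_inner_smul_left, huf f hf]
      have h1 : ⟪P₀, f⟫ = ⟪P₀, P₀⟫ := by
        have := hP₀' f (subset_affineSpan ℝ _ hf)
        rw [inner_sub_right] at this
        linarith
      rw [h1]
      field_simp
      norm_num
    have hdspan : d ∈ Submodule.span ℝ (FB b μ) :=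
      sub_mem hu_span (Submodule.smul_mem _ _ hP₀span)
    have hdd : ⟪d, d⟫ = 0 := by
      have hall : ∀ x ∈ Submodule.span ℝ (FB b μ), ⟪d, x⟫ = 0 := by
        intro x hx
        induction hx using Submodule.span_induction with
        | mem y hy => exact hdF y hy
        | zero => exact inner_zero_right _
        | add a c _ _ ha hc => rw [inner_add_right, ha, hc, add_zero]
        | smul r a _ ha => rw [real_inner_smul_right, ha, mul_zero]
      exact hall d hdspan
    have hd0 : d = 0 := inner_self_eq_zero.mp hdd
    rw [hD, sub_eq_zero] at hd0
    exact hd0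
  have huv : ∀ v : E, ⟪v, u⟫ = (⟪P₀, P₀⟫)⁻¹ * ⟪v, P₀⟫ := by
    intro v
    rw [hueq, real_inner_smul_right]
  have huv0 : ∀ v : E, (⟪v, u⟫ = 0 ↔ ⟪v, P₀⟫ = 0) := by
    intro v
    rw [huv]
    constructor
    · intro h
      rcases mul_eq_zero.mp h with h | h
      · exact absurd h (by positivity)
      · exact h
    · intro h; rw [h, mul_zero]
  -- coordinates
  have hvt : ∀ (l : Fin n → ℝ) (t : Fin n), ⟪∑ i, l i • b i, b t⟫ = l t := by
    intro l t
    rw [real_inner_comm]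
    exact coord b l t
  have hvf : ∀ (l : Fin n → ℝ) i j k, ⟪∑ t, l t • b t, b i + b j - b k⟫ = l i + l j - l k := by
    intro l i j k
    rw [inner_sub_right, inner_add_right, hvt, hvt, hvt]
  have hvu : ∀ l : Fin n → ℝ, ⟪∑ i, l i • b i, u⟫ = ∑ i, (1 - s i) * l i := by
    intro l
    rw [hu, inner_sum]
    apply Finset.sum_congr rfl
    intro i _
    rw [real_inner_smul_right, hvt]
  -- trace formula
  have htr_eq : ∀ (lam : E →ₗ[ℝ] E) (l : Fin n → ℝ), (∀ i, lam (b i) = l i • b i) →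
      LinearMap.trace ℝ E ((LinearMap.id - φ) ∘ₗ lam) = ∑ i, (1 - s i) * l i := by
    intro lam l hl
    apply trace_diag b
    intro i
    simp only [LinearMap.comp_apply, LinearMap.sub_apply, LinearMap.id_apply, hl i,
      map_smul, hb i, smul_smul]
    module
  -- the nu criterion
  have hnu : ∀ (l : Fin n → ℝ),
      (0 < nu b l μ ↔ ∃ f ∈ FB b μ, ⟪∑ i, l i • b i, f⟫ < 0) := by
    intro l
    set Sv : Set ℝ := {x : ℝ | ∃ i j k : Fin n, i < j ∧ ⟪μ (b i) (b j), b k⟫ ≠ 0 ∧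
      x = l i + l j - l k} with hSv
    have hSfin : Sv.Finite := by
      apply Set.Finite.subset
        (Set.finite_range fun t : Fin n × Fin n × Fin n => l t.1 + l t.2.1 - l t.2.2)
      rintro x ⟨i, j, k, _, _, rfl⟩
      exact ⟨(i, j, k), rfl⟩
    have hSne : Sv.Nonempty := by
      obtain ⟨f, i, j, k, hij, hc, rfl⟩ := hFne
      exact ⟨l i + l j - l k, i, j, k, hij, hc, rfl⟩
    have : nu b l μ = -sInf Sv := rfl
    rw [this, lt_neg, neg_zero]
    rw [csInf_lt_iff hSfin.bddBelow hSne]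
    constructor
    · rintro ⟨x, ⟨i, j, k, hij, hc, rfl⟩, hx⟩
      refine ⟨b i + b j - b k, ⟨i, j, k, hij, hc, rfl⟩, ?_⟩
      rw [hvf]
      exact hx
    · rintro ⟨f, ⟨i, j, k, hij, hc, rfl⟩, hf⟩
      refine ⟨l i + l j - l k, ⟨i, j, k, hij, hc, rfl⟩, ?_⟩
      rw [hvf] at hf
      exact hf
  -- main equivalence
  rw [← geo_main hFfin hFne hP₀ hP₀']
  constructor
  · intro h v hvP hvne
    set l : Fin n → ℝ := fun i => ⟪b i, v⟫ with hldef
    have hvrep : ∑ i, l i • b i = v := b.sum_repr' v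
    set lam : E →ₗ[ℝ] E := b.toBasis.constr ℝ (fun i => l i • b i) with hlam
    have hl : ∀ i, lam (b i) = l i • b i := by
      intro i
      have := b.toBasis.constr_basis ℝ (fun i => l i • b i) i
      rwa [OrthonormalBasis.coe_toBasis] at this
    have htrace : LinearMap.trace ℝ E ((LinearMap.id - φ) ∘ₗ lam) = 0 := by
      rw [htr_eq lam l hl, ← hvu l, hvrep]
      exact (huv0 v).mpr hvP
    have hnotder : ¬ IsDerivation μ lam := by
      intro hder
      rw [der_iff μ hμ b hl] at hder
      obtain ⟨f, ⟨i, j, k, hij, hc, rfl⟩, hfne0⟩ := hvne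
      apply hfne0
      rw [← hvrep, hvf]
      have := hder i j k hc
      linarith
    have := h lam l hl htrace hnotder
    rw [hnu l, hvrep] at this
    exact this
  · intro h lam l hl htrace hnotder
    set v : E := ∑ i, l i • b i with hvdef
    have hvP : ⟪v, P₀⟫ = 0 := by
      rw [← huv0 v, hvdef, hvu l]
      rw [htr_eq lam l hl] at htrace
      exact htrace
    have hvne : ∃ f ∈ FB b μ, ⟪v, f⟫ ≠ 0 := by
      rw [der_iff μ hμ b hl] at hnotder
      push_neg at hnotder
      obtain ⟨i, j, k, hc, hne'⟩ := hnotder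
      obtain ⟨i', j', hij', hc', hfF, hsum⟩ := hswap i j k hc
      refine ⟨b i' + b j' - b k, hfF, ?_⟩
      rw [hvdef, hvf]
      have := hsum l
      intro hcontra
      apply hne'
      linarith
    obtain ⟨f, hf, hflt⟩ := h v hvP hvne
    rw [hnu l]
    refine ⟨f, hf, ?_⟩
    rw [← hvdef]
    exact hflt

end
end

section
/- Let (𝔫, μ, ⟨·,·⟩) be a metric nilpotent Lie algebra with μ ≠ 0, whose inner product is compatible with a pre-Einstein derivation φ_μ, and let B = {e_i} be an orthonormal basis of 𝔫 consisting of eigenvectors of φ_μ. Enumerate F_B = {f_1, …, f_m} and let Y_B be the m × n real matrix with entries (Y_B)_{pq} := ⟨f_p, e_q⟩ (so that Y_B Y_Bᵗ is the Gram matrix ⟨f_p, f_q⟩). Then P₀ lies in the intrinsic interior of the convex hull of F_B if and only if there exist α_1, …, α_m > 0 with Σ_{p=1}^m α_p = ‖P₀‖^{-2} and Y_B Y_Bᵗ (α_1, …, α_m)ᵗ = (1, …, 1)ᵗ. (Here ‖P₀‖ ≠ 0.) -/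
open scoped BigOperators RealInnerProductSpace

noncomputable section

variable {E : Type*} [NormedAddCommGroup E] [InnerProductSpace ℝ E] [FiniteDimensional ℝ E]

section AuxLemmas

set_option linter.unusedSectionVars false

variable {V : Type*} [NormedAddCommGroup V] [NormedSpace ℝ V]

lemma mem_convexHull_range_iff' {m : ℕ} (f : Fin m → V) (x : V) :
    x ∈ convexHull ℝ (Set.range f) ↔
      ∃ w : Fin m → ℝ, (∀ p, 0 ≤ w p) ∧ ∑ p, w p = 1 ∧ ∑ p, w p • f p = x := by
  rw [convexHull_range_eq_exists_affineCombination, Set.mem_setOf_eq]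
  constructor
  · rintro ⟨t, w, hw0, hw1, rfl⟩
    refine ⟨fun p => if p ∈ t then w p else 0, fun p => ?_, ?_, ?_⟩
    · dsimp only; split
      · exact hw0 _ ‹_›
      · exact le_refl 0
    · simp only; rw [Finset.sum_ite_mem, Finset.univ_inter, hw1]
    · rw [t.affineCombination_eq_linear_combination f w hw1]
      rw [← Finset.sum_subset (Finset.subset_univ t)]
      · exact Finset.sum_congr rfl fun p hp => by simp [hp]
      · intro p _ hp; simp [hp]
  · rintro ⟨w, hw0, hw1, rfl⟩
    exact ⟨Finset.univ, w, fun p _ => hw0 p, hw1,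
      Finset.univ.affineCombination_eq_linear_combination f w hw1⟩

lemma mem_interior_convexHull_range_iff [FiniteDimensional ℝ V] {m : ℕ} (f : Fin m → V)
    (hspan : affineSpan ℝ (Set.range f) = ⊤) (x : V) :
    x ∈ interior (convexHull ℝ (Set.range f)) ↔
      ∃ w : Fin m → ℝ, (∀ p, 0 < w p) ∧ ∑ p, w p = 1 ∧ ∑ p, w p • f p = x := by
  have hm : 0 < m := by
    by_contra h
    push_neg at h
    interval_cases m
    have h0 : (Set.range f) = ∅ := by simp [Set.range_eq_empty]
    have h1 : ((affineSpan ℝ (Set.range f) : AffineSubspace ℝ V) : Set V).Nonempty := by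
      rw [hspan]; exact ⟨0, trivial⟩
    rw [affineSpan_nonempty, h0] at h1
    exact Set.not_nonempty_empty h1
  haveI : Nonempty (Fin m) := ⟨⟨0, hm⟩⟩
  constructor
  · intro hx
    have hmain : ∀ p₀ : Fin m, ∃ u : Fin m → ℝ,
        (∀ p, 0 ≤ u p) ∧ ∑ p, u p = 1 ∧ ∑ p, u p • f p = x ∧ 0 < u p₀ := by
      intro p₀
      by_cases hxp : x = f p₀
      · refine ⟨fun p => if p = p₀ then 1 else 0, fun p => by positivity, by simp, ?_, by simp⟩
        simp [ite_smul, hxp]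
      · obtain ⟨ε, hε, hball⟩ := Metric.isOpen_iff.mp isOpen_interior x hx
        have hne0 : x - f p₀ ≠ 0 := sub_ne_zero.mpr hxp
        have hnorm : 0 < ‖x - f p₀‖ := norm_pos_iff.mpr hne0
        set t : ℝ := ε / (2 * ‖x - f p₀‖) with ht_def
        have ht : 0 < t := by positivity
        have hy : x + t • (x - f p₀) ∈ convexHull ℝ (Set.range f) := by
          refine interior_subset (hball ?_)
          rw [Metric.mem_ball, dist_eq_norm]
          have h9 : x + t • (x - f p₀) - x = t • (x - f p₀) := by abel
          rw [h9, norm_smul, Real.norm_eq_abs, abs_of_pos ht, ht_def]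
          calc ε / (2 * ‖x - f p₀‖) * ‖x - f p₀‖ = ε / 2 := by field_simp
            _ < ε := by linarith
        obtain ⟨ν, hν0, hν1, hνx⟩ := (mem_convexHull_range_iff' f _).mp hy
        have h1t : (0:ℝ) < 1 + t := by linarith
        refine ⟨fun p => (1 + t)⁻¹ * ν p + if p = p₀ then t / (1 + t) else 0,
          fun p => ?_, ?_, ?_, ?_⟩
        · have := hν0 p
          have h1 : 0 ≤ (1 + t)⁻¹ * ν p := by positivity
          have h2 : (0:ℝ) ≤ if p = p₀ then t / (1 + t) else 0 := by
            split
            · positivity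
            · exact le_refl 0
          exact add_nonneg h1 h2
        · rw [Finset.sum_add_distrib, ← Finset.mul_sum, hν1]
          simp [Finset.sum_ite_eq']
          field_simp
        · simp only [add_smul, Finset.sum_add_distrib, ite_smul, zero_smul,
            Finset.sum_ite_eq', Finset.mem_univ, if_true]
          have hsum : ∑ p, ((1 + t)⁻¹ * ν p) • f p = (1 + t)⁻¹ • (x + t • (x - f p₀)) := by
            rw [← hνx, Finset.smul_sum]
            exact Finset.sum_congr rfl fun p _ => by rw [smul_smul]
          rw [hsum]
          have hne : (1 + t) ≠ 0 := ne_of_gt h1t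
          rw [div_eq_mul_inv]
          match_scalars
          · field_simp
          · field_simp; ring
        · have := hν0 p₀
          have h2 : (0:ℝ) < t / (1 + t) := by positivity
          have h1 : 0 ≤ (1 + t)⁻¹ * ν p₀ := by positivity
          show 0 < (1 + t)⁻¹ * ν p₀ + if p₀ = p₀ then t / (1 + t) else 0
          rw [if_pos rfl]
          linarith
    choose u hu0 hu1 hux hupos using hmain
    refine ⟨fun p => (m:ℝ)⁻¹ * ∑ p₀, u p₀ p, fun p => ?_, ?_, ?_⟩
    · have hs : 0 < ∑ p₀, u p₀ p :=
        Finset.sum_pos' (fun p₀ _ => hu0 p₀ p) ⟨p, Finset.mem_univ p, hupos p⟩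
      positivity
    · rw [← Finset.mul_sum, Finset.sum_comm]
      simp_rw [hu1]
      simp [Finset.sum_const]
      field_simp
    · have hmne : ((m:ℝ)) ≠ 0 := Nat.cast_ne_zero.mpr hm.ne'
      calc ∑ p, ((m:ℝ)⁻¹ * ∑ p₀, u p₀ p) • f p
          = ∑ p, ∑ p₀, (m:ℝ)⁻¹ • (u p₀ p • f p) := by
            refine Finset.sum_congr rfl fun p _ => ?_
            rw [Finset.mul_sum, Finset.sum_smul]
            exact Finset.sum_congr rfl fun p₀ _ => by rw [mul_smul]
        _ = ∑ p₀, ∑ p, (m:ℝ)⁻¹ • (u p₀ p • f p) := Finset.sum_comm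
        _ = ∑ p₀ : Fin m, (m:ℝ)⁻¹ • x := by
            refine Finset.sum_congr rfl fun p₀ _ => ?_
            rw [← Finset.smul_sum, hux p₀]
        _ = x := by
            rw [Finset.sum_const, Finset.card_univ, Fintype.card_fin,
              ← Nat.cast_smul_eq_nsmul ℝ m, smul_smul, mul_inv_cancel₀ hmne, one_smul]
  · rintro ⟨w, hw0, hw1, hwx⟩
    obtain ⟨z, hz⟩ := interior_convexHull_nonempty_iff_affineSpan_eq_top.mpr hspan
    obtain ⟨ν, hν0, hν1, hνz⟩ := (mem_convexHull_range_iff' f z).mp (interior_subset hz)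
    set δ : ℝ := Finset.univ.inf' Finset.univ_nonempty w with hδ
    have hδpos : 0 < δ := by
      rw [hδ, Finset.lt_inf'_iff]
      exact fun p _ => hw0 p
    have hδle : ∀ p, δ ≤ w p := fun p => Finset.inf'_le _ (Finset.mem_univ p)
    set ε : ℝ := δ / 2 with hε
    have hεpos : 0 < ε := by positivity
    have hν_le : ∀ p, ν p ≤ 1 := by
      intro p
      rw [← hν1]
      exact Finset.single_le_sum (fun q _ => hν0 q) (Finset.mem_univ p)
    have hc0 : ∀ p, 0 ≤ (1 + ε) * w p - ε * ν p := by
      intro p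
      have h1 : ε * ν p ≤ ε := by nlinarith [hν0 p, hν_le p]
      nlinarith [hw0 p, hδle p]
    have hcs : ∑ p, ((1 + ε) * w p - ε * ν p) = 1 := by
      simp only [Finset.sum_sub_distrib, ← Finset.mul_sum, hw1, hν1]
      ring
    have hy : ∑ p, ((1 + ε) * w p - ε * ν p) • f p ∈ convexHull ℝ (Set.range f) :=
      (mem_convexHull_range_iff' f _).mpr ⟨_, hc0, hcs, rfl⟩
    have hyx : ∑ p, ((1 + ε) * w p - ε * ν p) • f p = (1 + ε) • x - ε • z := by
      simp only [sub_smul, Finset.sum_sub_distrib, mul_smul]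
      rw [← Finset.smul_sum, ← Finset.smul_sum, hwx, hνz]
    have h1ε : (0:ℝ) < 1 + ε := by linarith
    have hxeq : x = (ε / (1 + ε)) • z + (1 / (1 + ε)) • ((1 + ε) • x - ε • z) := by
      have hne : (1 + ε) ≠ 0 := ne_of_gt h1ε
      match_scalars <;> field_simp <;> ring
    have hab : ε / (1 + ε) + 1 / (1 + ε) = 1 := by field_simp; ring
    have hmem := (convex_convexHull ℝ (Set.range f)).combo_interior_self_mem_interior hz hy
      (by positivity) (by positivity) hab
    rw [hyx] at hmem
    rw [hxeq]
    exact hmem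

lemma intrinsicInterior_eq_interior_of_span_top {s : Set V} (h : affineSpan ℝ s = ⊤) :
    intrinsicInterior ℝ s = interior s := by
  have hcoe : ((affineSpan ℝ s : AffineSubspace ℝ V) : Set V) = Set.univ := by
    rw [h]; rfl
  let e : (affineSpan ℝ s : AffineSubspace ℝ V) ≃ₜ V :=
    (Homeomorph.setCongr hcoe).trans (Homeomorph.Set.univ V)
  have hee : (Subtype.val : (affineSpan ℝ s : AffineSubspace ℝ V) → V) = ⇑e := rfl
  rw [intrinsicInterior, hee, ← Homeomorph.preimage_interior, Homeomorph.image_preimage]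

lemma key_intrinsic [FiniteDimensional ℝ V] {m : ℕ} (hm : 0 < m) (f : Fin m → V) (x : V) :
    x ∈ intrinsicInterior ℝ (convexHull ℝ (Set.range f)) ↔
      ∃ w : Fin m → ℝ, (∀ p, 0 < w p) ∧ ∑ p, w p = 1 ∧ ∑ p, w p • f p = x := by
  haveI : Nonempty (Fin m) := ⟨⟨0, hm⟩⟩
  set A : AffineSubspace ℝ V := affineSpan ℝ (Set.range f) with hA
  set D : Submodule ℝ V := A.direction with hD
  set x₀ : V := f ⟨0, hm⟩ with hx₀
  have hx₀A : x₀ ∈ A := subset_affineSpan ℝ _ (Set.mem_range_self _)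
  have hfA : ∀ p, f p ∈ A := fun p => subset_affineSpan ℝ _ (Set.mem_range_self _)
  have hgd : ∀ p, f p - x₀ ∈ D := fun p => AffineSubspace.vsub_mem_direction (hfA p) hx₀A
  set g : Fin m → D := fun p => ⟨f p - x₀, hgd p⟩ with hg
  set ι : D →ᵃⁱ[ℝ] V :=
    (AffineIsometryEquiv.constVAdd ℝ V x₀).toAffineIsometry.comp
      D.subtypeₗᵢ.toAffineIsometry with hι
  have hιapp : ∀ v : D, ι v = x₀ + (v : V) := by
    intro v
    simp [hι, AffineIsometryEquiv.coe_constVAdd, vadd_eq_add]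
  have hιg : ∀ p, ι (g p) = f p := fun p => by rw [hιapp]; simp [hg]
  have hrange : Set.range f = ι '' Set.range g := by
    rw [← Set.range_comp]
    exact congrArg Set.range (funext fun p => (hιg p).symm)
  have himg : (Subtype.val : D → V) '' (Set.range g -ᵥ Set.range g)
      = Set.range f -ᵥ Set.range f := by
    ext v
    simp only [Set.mem_image, Set.mem_vsub]
    constructor
    · rintro ⟨u, ⟨a, ⟨p, rfl⟩, b, ⟨q, rfl⟩, rfl⟩, rfl⟩
      refine ⟨f p, ⟨p, rfl⟩, f q, ⟨q, rfl⟩, ?_⟩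
      show f p - f q = ((g p -ᵥ g q : D) : V)
      simp only [vsub_eq_sub, hg, AddSubgroupClass.coe_sub]
      abel
    · rintro ⟨a, ⟨p, rfl⟩, b, ⟨q, rfl⟩, rfl⟩
      refine ⟨g p -ᵥ g q, ⟨g p, ⟨p, rfl⟩, g q, ⟨q, rfl⟩, rfl⟩, ?_⟩
      show ((g p -ᵥ g q : D) : V) = f p - f q
      simp only [vsub_eq_sub, hg, AddSubgroupClass.coe_sub]
      abel
  have hspan : affineSpan ℝ (Set.range g) = ⊤ := by
    rw [← AffineSubspace.direction_eq_top_iff_of_nonempty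
      ((Set.range_nonempty g).mono (subset_affineSpan ℝ _))]
    rw [direction_affineSpan]
    apply Submodule.map_injective_of_injective D.injective_subtype
    rw [Submodule.map_subtype_top, vectorSpan_def, Submodule.map_span]
    show Submodule.span ℝ ((Subtype.val : D → V) '' (Set.range g -ᵥ Set.range g)) = D
    rw [himg, ← vectorSpan_def, hD, hA, direction_affineSpan]
  have hcomp : ∀ w : Fin m → ℝ, ∑ p, w p = 1 → ι (∑ p, w p • g p) = ∑ p, w p • f p := by
    intro w hw1
    rw [hιapp]
    have hcoe2 : ((∑ p, w p • g p : D) : V) = ∑ p, w p • (f p - x₀) := by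
      push_cast
      rfl
    rw [hcoe2]
    simp only [smul_sub, Finset.sum_sub_distrib, ← Finset.sum_smul, hw1, one_smul]
    abel
  have himg2 : convexHull ℝ (Set.range f) = ι '' convexHull ℝ (Set.range g) := by
    rw [hrange, ← AffineIsometry.coe_toAffineMap, AffineMap.image_convexHull]
  rw [himg2, AffineIsometry.image_intrinsicInterior,
    intrinsicInterior_eq_interior_of_span_top (by rw [affineSpan_convexHull]; exact hspan)]
  constructor
  · rintro ⟨d, hd, rfl⟩
    obtain ⟨w, hw0, hw1, hwd⟩ := (mem_interior_convexHull_range_iff g hspan d).mp hd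
    exact ⟨w, hw0, hw1, by rw [← hwd, hcomp w hw1]⟩
  · rintro ⟨w, hw0, hw1, hwx⟩
    exact ⟨∑ p, w p • g p,
      (mem_interior_convexHull_range_iff g hspan _).mpr ⟨w, hw0, hw1, rfl⟩,
      by rw [hcomp w hw1, hwx]⟩

lemma inner_eq_const_of_mem_affineSpan (h : E) (c : ℝ) (S : Set E)
    (hS : ∀ x ∈ S, ⟪x, h⟫ = c) {x : E} (hx : x ∈ affineSpan ℝ S) : ⟪x, h⟫ = c := by
  let Q : AffineSubspace ℝ E :=
    { carrier := {y | ⟪y, h⟫ = c}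
      smul_vsub_vadd_mem' := by
        intro t p₁ p₂ p₃ h₁ h₂ h₃
        simp only [Set.mem_setOf_eq] at h₁ h₂ h₃ ⊢
        rw [vsub_eq_sub, vadd_eq_add, inner_add_left, real_inner_smul_left,
          inner_sub_left, h₁, h₂, h₃]
        ring }
  have hle : affineSpan ℝ S ≤ Q := affineSpan_le.mpr hS
  exact hle hx

end AuxLemmas

set_option linter.unusedSectionVars false in
set_option linter.unusedVariables false in
theorem proj_mem_intrinsicInterior_iff_linear_system {n : ℕ} (hn : 1 ≤ n)
    (μ : E →ₗ[ℝ] E →ₗ[ℝ] E) (hμ : IsLieBracket μ) (hnil : IsNilpotentBracket μ)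
    (hne : μ ≠ 0) (φ : E →ₗ[ℝ] E) (hφ : IsPreEinstein μ φ) (hcompat : φ.IsSymmetric)
    (b : OrthonormalBasis (Fin n) ℝ E) (s : Fin n → ℝ) (hb : ∀ i, φ (b i) = s i • b i)
    (m : ℕ) (f : Fin m → E) (hfinj : Function.Injective f)
    (hfrange : Set.range f = FB b μ)
    (P₀ : E) (hP₀ : P₀ ∈ affineSpan ℝ (FB b μ))
    (hP₀' : ∀ w ∈ affineSpan ℝ (FB b μ), ⟪P₀, w - P₀⟫ = 0) :
    ‖P₀‖ ≠ 0 ∧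
    (P₀ ∈ intrinsicInterior ℝ (convexHull ℝ (FB b μ)) ↔
      ∃ α : Fin m → ℝ, (∀ p, 0 < α p) ∧ (∑ p, α p) = (‖P₀‖ ^ 2)⁻¹ ∧
        ((Matrix.of fun p q => ⟪f p, b q⟫ : Matrix (Fin m) (Fin n) ℝ) *
          Matrix.transpose (Matrix.of fun p q => ⟪f p, b q⟫ : Matrix (Fin m) (Fin n) ℝ)).mulVec α =
          fun _ => 1) := by
  have hbb : ∀ p q : Fin n, ⟪b p, b q⟫ = if p = q then (1:ℝ) else 0 :=
    orthonormal_iff_ite.mp b.orthonormal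
  -- antisymmetry
  have hanti : ∀ X Y : E, μ X Y = -μ Y X := by
    intro X Y
    have h1 := hμ.1 (X + Y)
    simp only [map_add, LinearMap.add_apply, hμ.1, zero_add, add_zero] at h1
    exact eq_neg_of_add_eq_zero_right h1
  -- FB is nonempty, hence m ≥ 1
  have hFBne : (FB b μ).Nonempty := by
    have hij : ∃ i j : Fin n, μ (b i) (b j) ≠ 0 := by
      by_contra hc
      push_neg at hc
      apply hne
      ext X Y
      show μ X Y = 0
      conv_lhs => rw [← b.sum_repr' X, ← b.sum_repr' Y]
      simp [map_sum, map_smul, hc]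
    obtain ⟨i, j, hij⟩ := hij
    have hne' : i ≠ j := by
      rintro rfl
      exact hij (hμ.1 (b i))
    rcases hne'.lt_or_gt with hlt | hlt
    · have hk : ∃ k, ⟪μ (b i) (b j), b k⟫ ≠ 0 := by
        by_contra hc
        push_neg at hc
        apply hij
        have := b.sum_repr' (μ (b i) (b j))
        rw [← this]
        refine Finset.sum_eq_zero fun k _ => ?_
        rw [real_inner_comm, hc k, zero_smul]
      obtain ⟨k, hk⟩ := hk
      exact ⟨b i + b j - b k, i, j, k, hlt, hk, rfl⟩
    · have hij' : μ (b j) (b i) ≠ 0 := by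
        rw [hanti]
        simpa using hij
      have hk : ∃ k, ⟪μ (b j) (b i), b k⟫ ≠ 0 := by
        by_contra hc
        push_neg at hc
        apply hij'
        have := b.sum_repr' (μ (b j) (b i))
        rw [← this]
        refine Finset.sum_eq_zero fun k _ => ?_
        rw [real_inner_comm, hc k, zero_smul]
      obtain ⟨k, hk⟩ := hk
      exact ⟨b j + b i - b k, j, i, k, hlt, hk, rfl⟩
  have hm : 0 < m := by
    rcases Nat.eq_zero_or_pos m with h0 | h0
    · exfalso
      obtain ⟨x, hx⟩ := hFBne
      rw [← hfrange] at hx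
      obtain ⟨p, -⟩ := hx
      subst h0
      exact p.elim0
    · exact h0
  -- eigenvalue relation
  have hsum : ∀ i j k : Fin n, ⟪μ (b i) (b j), b k⟫ ≠ 0 → s i + s j = s k := by
    intro i j k hijk
    have hder := hφ.1 (b i) (b j)
    rw [hb i, hb j] at hder
    have hv : φ (μ (b i) (b j)) = (s i + s j) • μ (b i) (b j) := by
      rw [hder]
      simp only [map_smul, LinearMap.smul_apply, add_smul]
    have h2 : ⟪φ (μ (b i) (b j)), b k⟫ = s k * ⟪μ (b i) (b j), b k⟫ := by
      rw [hcompat (μ (b i) (b j)) (b k), hb k, real_inner_smul_right]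
    rw [hv, real_inner_smul_left] at h2
    exact mul_right_cancel₀ hijk h2
  -- the linear functional given by hvec
  set hvec : E := ∑ q, (1 + s q) • b q with hhvec
  have hFB1 : ∀ x ∈ FB b μ, ⟪x, hvec⟫ = 1 := by
    rintro x ⟨i, j, k, hij, hijk, rfl⟩
    have hsk := hsum i j k hijk
    rw [hhvec, inner_sum]
    have hterm : ∀ q, ⟪b i + b j - b k, (1 + s q) • b q⟫
        = ((1 + s q) * (if i = q then 1 else 0) + (1 + s q) * (if j = q then 1 else 0))
          - (1 + s q) * (if k = q then 1 else 0) := by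
      intro q
      rw [real_inner_smul_right, inner_sub_left, inner_add_left, hbb, hbb, hbb]
      ring
    simp_rw [hterm, mul_ite, mul_one, mul_zero]
    rw [Finset.sum_sub_distrib, Finset.sum_add_distrib]
    simp only [Finset.sum_ite_eq, Finset.mem_univ, if_true]
    linarith [hsk]
  -- P₀ is nonzero
  have hP1 : ⟪P₀, hvec⟫ = 1 := inner_eq_const_of_mem_affineSpan hvec 1 _ hFB1 hP₀
  have hPne : P₀ ≠ 0 := by
    rintro rfl
    rw [inner_zero_left] at hP1
    norm_num at hP1
  have hPnorm : ‖P₀‖ ≠ 0 := norm_ne_zero_iff.mpr hPne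
  have hP2pos : (0:ℝ) < ‖P₀‖ ^ 2 := by positivity
  refine ⟨hPnorm, ?_⟩
  have hP2 : ∀ w ∈ affineSpan ℝ (FB b μ), ⟪P₀, w⟫ = ‖P₀‖ ^ 2 := by
    intro w hw
    have h3 := hP₀' w hw
    rw [inner_sub_right, sub_eq_zero] at h3
    rw [h3, real_inner_self_eq_norm_sq]
  -- matrix condition rewrite
  have hmat : ∀ α : Fin m → ℝ,
      (((Matrix.of fun p q => ⟪f p, b q⟫ : Matrix (Fin m) (Fin n) ℝ) *
        Matrix.transpose (Matrix.of fun p q => ⟪f p, b q⟫)).mulVec α = fun _ => 1)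
      ↔ ∀ p, ⟪f p, ∑ p', α p' • f p'⟫ = 1 := by
    intro α
    rw [funext_iff]
    refine forall_congr' fun p => ?_
    have hentry : ∀ p', ((Matrix.of fun p q => ⟪f p, b q⟫ : Matrix (Fin m) (Fin n) ℝ) *
        Matrix.transpose (Matrix.of fun p q => ⟪f p, b q⟫)) p p' = ⟪f p, f p'⟫ := by
      intro p'
      rw [Matrix.mul_apply]
      simp only [Matrix.transpose_apply, Matrix.of_apply]
      rw [← OrthonormalBasis.sum_inner_mul_inner b (f p) (f p')]
      exact Finset.sum_congr rfl fun q _ => by rw [real_inner_comm (f p') (b q)]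
    have hLHS : (((Matrix.of fun p q => ⟪f p, b q⟫ : Matrix (Fin m) (Fin n) ℝ) *
        Matrix.transpose (Matrix.of fun p q => ⟪f p, b q⟫)).mulVec α) p
        = ∑ p', ⟪f p, f p'⟫ * α p' := by
      simp only [Matrix.mulVec, dotProduct]
      exact Finset.sum_congr rfl fun p' _ => by rw [hentry p']
    have hRHS : ⟪f p, ∑ p', α p' • f p'⟫ = ∑ p', ⟪f p, f p'⟫ * α p' := by
      rw [inner_sum]
      exact Finset.sum_congr rfl fun p' _ => by
        rw [real_inner_smul_right]; ring
    rw [hLHS, hRHS]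
  rw [← hfrange] at hP₀ hP2 ⊢
  rw [key_intrinsic hm f P₀]
  constructor
  · rintro ⟨w, hw0, hw1, hwP⟩
    refine ⟨fun p => (‖P₀‖ ^ 2)⁻¹ * w p, fun p => by have := hw0 p; positivity, ?_, ?_⟩
    · rw [← Finset.mul_sum, hw1, mul_one]
    · rw [hmat]
      intro p
      have hfp : f p ∈ affineSpan ℝ (Set.range f) :=
        subset_affineSpan ℝ _ (Set.mem_range_self p)
      have hsum2 : ∑ p', ((‖P₀‖ ^ 2)⁻¹ * w p') • f p' = (‖P₀‖ ^ 2)⁻¹ • P₀ := by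
        rw [← hwP, Finset.smul_sum]
        exact Finset.sum_congr rfl fun p' _ => by rw [smul_smul]
      rw [hsum2, real_inner_smul_right, real_inner_comm, hP2 (f p) hfp,
        inv_mul_cancel₀ hP2pos.ne']
  · rintro ⟨α, hα0, hα1, hαmat⟩
    rw [hmat] at hαmat
    set w : Fin m → ℝ := fun p => ‖P₀‖ ^ 2 * α p with hwdef
    have hw0 : ∀ p, 0 < w p := fun p => mul_pos hP2pos (hα0 p)
    have hw1 : ∑ p, w p = 1 := by
      rw [hwdef, ← Finset.mul_sum, hα1, mul_inv_cancel₀ hP2pos.ne']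
    have hvhull : (∑ p, w p • f p) ∈ convexHull ℝ (Set.range f) :=
      (mem_convexHull_range_iff' f _).mpr ⟨w, fun p => (hw0 p).le, hw1, rfl⟩
    have hvspan : (∑ p, w p • f p) ∈ affineSpan ℝ (Set.range f) :=
      convexHull_subset_affineSpan _ hvhull
    have hxv : ∀ x ∈ Set.range f, ⟪x, ∑ p, w p • f p⟫ = ‖P₀‖ ^ 2 := by
      rintro x ⟨p, rfl⟩
      have hxp : ⟪f p, ∑ p', w p' • f p'⟫ = ‖P₀‖ ^ 2 * ⟪f p, ∑ p', α p' • f p'⟫ := by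
        rw [inner_sum, inner_sum, Finset.mul_sum]
        refine Finset.sum_congr rfl fun p' _ => ?_
        rw [real_inner_smul_right, real_inner_smul_right, hwdef]
        ring
      rw [hxp, hαmat p, mul_one]
    have hvaff : ∀ x ∈ affineSpan ℝ (Set.range f), ⟪x, ∑ p, w p • f p⟫ = ‖P₀‖ ^ 2 :=
      fun x hx => inner_eq_const_of_mem_affineSpan _ _ _ hxv hx
    have hveq : (∑ p, w p • f p) = P₀ := by
      have h1 : ⟪(∑ p, w p • f p) - P₀, (∑ p, w p • f p) - P₀⟫ = (0:ℝ) := by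
        rw [inner_sub_left, inner_sub_right, inner_sub_right]
        rw [hvaff _ hvspan, hvaff _ hP₀]
        have e1 : ⟪∑ p, w p • f p, P₀⟫ = ‖P₀‖ ^ 2 := by
          rw [real_inner_comm]; exact hP2 _ hvspan
        have e2 : ⟪P₀, P₀⟫ = ‖P₀‖ ^ 2 := real_inner_self_eq_norm_sq P₀
        rw [e1, e2]
        ring
      have h2 := inner_self_eq_zero.mp h1
      exact sub_eq_zero.mp h2
    exact ⟨w, hw0, hw1, hveq⟩

end
end

section
/- Let (𝔫, μ, ⟨·,·⟩) be a metric nilpotent Lie algebra of dimension n ≥ 2 with μ ≠ 0 whose pre-Einstein derivation vanishes, φ_μ = 0. Let {e_i}_{i=1}^n be an orthonormal basis of 𝔫 such that μ(e_n, X) = 0 for every X ∈ 𝔫, and let λ be the endomorphism that is diagonal with respect to this basis with λ e_i = e_i for i < n and λ e_n = −(n−1)·e_n. Then tr(λ) = 0 (so λ is a self-adjoint trace-free endomorphism, i.e. λ ∈ 𝔭 since id − φ_μ = id), λ is not a derivation of μ, and ν(λ;μ) := −min{ λ_i + λ_j − λ_k : 1 ≤ i < j ≤ n, 1 ≤ k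 ≤ n, μ^k_{ij} ≠ 0 } ≤ −1 < 0, where λ_i are the eigenvalues of λ and μ(e_i,e_j) = Σ_k μ^k_{ij} e_k. -/
open scoped BigOperators RealInnerProductSpace

noncomputable section

variable {E : Type*} [NormedAddCommGroup E] [InnerProductSpace ℝ E] [FiniteDimensional ℝ E]

/-- Antisymmetry from the alternating property. -/
lemma alt_antisymm (μ : E →ₗ[ℝ] E →ₗ[ℝ] E) (h : ∀ X, μ X X = 0) (X Y : E) :
    μ X Y = - μ Y X := by
  have h2 := h (X + Y)
  simp only [map_add, LinearMap.add_apply, h X, h Y, zero_add, add_zero] at h2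
  have h3 : μ X Y + μ Y X = 0 := by rw [add_comm]; exact h2
  exact eq_neg_of_add_eq_zero_left h3

/-- If a bilinear map vanishes on all basis pairs, it is zero. -/
lemma bilin_eq_zero_of_basis {ι : Type*} [Fintype ι] (c : Module.Basis ι ℝ E)
    (μ : E →ₗ[ℝ] E →ₗ[ℝ] E) (h : ∀ i j, μ (c i) (c j) = 0) : μ = 0 := by
  apply LinearMap.ext; intro X
  apply LinearMap.ext; intro Y
  rw [← c.sum_repr X, ← c.sum_repr Y]
  simp only [map_sum, map_smul, LinearMap.sum_apply, LinearMap.smul_apply, h, smul_zero, Finset.sum_const_zero, LinearMap.zero_apply]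

theorem obstruction_of_preEinstein_eq_zero {n : ℕ} (hn : 2 ≤ n)
    (μ : E →ₗ[ℝ] E →ₗ[ℝ] E) (hμ : IsLieBracket μ) (hnil : IsNilpotentBracket μ)
    (hne : μ ≠ 0) (hφ : IsPreEinstein μ (0 : E →ₗ[ℝ] E))
    (b : OrthonormalBasis (Fin n) ℝ E)
    (hcentral : ∀ X : E, μ (b ⟨n - 1, by omega⟩) X = 0)
    (l : Fin n → ℝ)
    (hl : ∀ i : Fin n, l i = if (i : ℕ) = n - 1 then -((n : ℝ) - 1) else 1)
    (lam : E →ₗ[ℝ] E) (hlam : ∀ i, lam (b i) = l i • b i) :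
    LinearMap.trace ℝ E lam = 0 ∧ ¬ IsDerivation μ lam ∧
    nu b l μ ≤ -1 ∧ nu b l μ < 0 := by
  have hanti : ∀ X Y, μ X Y = - μ Y X := alt_antisymm μ hμ.1
  have hnn : (2:ℝ) ≤ (n:ℝ) := by exact_mod_cast hn
  set nlast : Fin n := ⟨n - 1, by omega⟩ with hnlast
  have hlb : ∀ k : Fin n, l k ≤ 1 := by
    intro k; rw [hl k]; split
    · linarith
    · exact le_refl 1
  have hl2 : ∀ k : Fin n, l k ≠ 2 := fun k hk => by have := hlb k; rw [hk] at this; linarith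
  -- key: lam v = 2 • v implies v = 0
  have key : ∀ v : E, lam v = (2:ℝ) • v → v = 0 := by
    intro v hv
    set c : Fin n → ℝ := fun k => b.toBasis.repr v k with hc
    have hexp : lam v = ∑ k, (c k * l k) • b.toBasis k := by
      conv_lhs => rw [← b.toBasis.sum_repr v]
      rw [map_sum]
      refine Finset.sum_congr rfl fun k _ => ?_
      rw [map_smul]
      simp only [OrthonormalBasis.coe_toBasis, hlam, smul_smul]
      rfl
    have h3 : (∑ k, (c k * l k) • b.toBasis k) = (2:ℝ) • v := by rw [← hexp, hv]
    have hczero : ∀ k, c k = 0 := by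
      intro k
      have h4 := congrArg (fun w => b.toBasis.repr w k) h3
      simp only [Module.Basis.repr_sum_self, map_smul, Finsupp.smul_apply, smul_eq_mul] at h4
      have h5 : c k * (l k - 2) = 0 := by
        have : c k * l k = 2 * c k := h4
        ring_nf
        linarith [this]
      rcases mul_eq_zero.mp h5 with h | h
      · exact h
      · exact absurd (by linarith : l k = 2) (hl2 k)
    have : v = ∑ k, c k • b.toBasis k := (b.toBasis.sum_repr v).symm
    rw [this]
    simp [hczero]
  -- the bracket vanishes on all basis pairs if lam is a derivation
  have hnotder : ¬ IsDerivation μ lam := by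
    intro hd
    have hzero : ∀ i j : Fin n, μ (b i) (b j) = 0 := by
      intro i j
      by_cases hi : (i : ℕ) = n - 1
      · have : b i = b nlast := by congr 1; exact Fin.ext hi
        rw [this]; exact hcentral _
      by_cases hj : (j : ℕ) = n - 1
      · have hbj : b j = b nlast := by congr 1; exact Fin.ext hj
        rw [hanti, hbj, hcentral, neg_zero]
      · apply key
        rw [hd, hlam, hlam, hl i, hl j, if_neg hi, if_neg hj]
        simp [two_smul]
    exact hne (bilin_eq_zero_of_basis b.toBasis μ (by simpa using hzero))
  -- trace
  have htr : LinearMap.trace ℝ E lam = 0 := by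
    rw [LinearMap.trace_eq_matrix_trace ℝ b.toBasis lam, Matrix.trace]
    have hdiag : ∀ i : Fin n, (LinearMap.toMatrix b.toBasis b.toBasis lam) i i = l i := by
      intro i
      rw [LinearMap.toMatrix_apply]
      simp [OrthonormalBasis.coe_toBasis, hlam, Module.Basis.repr_self]
    have hrw : ∀ i : Fin n, l i = 1 + (if i = nlast then -(n:ℝ) else 0) := by
      intro i
      rw [hl i]
      by_cases h : (i : ℕ) = n - 1
      · rw [if_pos h, if_pos (Fin.ext h)]; ring
      · rw [if_neg h, if_neg (fun hh => h (by rw [hh]))]; ring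
    calc (∑ i, Matrix.diag (LinearMap.toMatrix b.toBasis b.toBasis lam) i)
        = ∑ i, l i := by
          refine Finset.sum_congr rfl fun i _ => ?_
          exact hdiag i
      _ = ∑ i : Fin n, (1 + (if i = nlast then -(n:ℝ) else 0)) := by
          exact Finset.sum_congr rfl fun i _ => hrw i
      _ = 0 := by
          rw [Finset.sum_add_distrib, Finset.sum_ite_eq' Finset.univ nlast (fun _ => -(n:ℝ))]
          simp
  -- the set defining nu
  set S : Set ℝ :=
    {x : ℝ | ∃ i j k : Fin n, i < j ∧ ⟪μ (b i) (b j), b k⟫ ≠ 0 ∧ x = l i + l j - l k} with hS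
  -- nonemptiness
  have hSne : S.Nonempty := by
    by_contra hSe
    rw [Set.not_nonempty_iff_eq_empty] at hSe
    -- then all inner products with i < j vanish, hence μ = 0
    have hall : ∀ i j : Fin n, i < j → μ (b i) (b j) = 0 := by
      intro i j hij
      by_contra hv
      have hk : ∃ k : Fin n, ⟪μ (b i) (b j), b k⟫ ≠ 0 := by
        by_contra hk0
        push_neg at hk0
        apply hv
        have : ∀ k, b.repr (μ (b i) (b j)) k = 0 := by
          intro k
          rw [b.repr_apply_apply, real_inner_comm]
          exact hk0 k
        apply b.repr.injective
        ext k
        simp [this k]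
      obtain ⟨k, hk⟩ := hk
      have : (l i + l j - l k) ∈ S := ⟨i, j, k, hij, hk, rfl⟩
      rw [hSe] at this
      exact this
    have hzero : ∀ i j : Fin n, μ (b i) (b j) = 0 := by
      intro i j
      rcases lt_trichotomy i j with h | h | h
      · exact hall i j h
      · rw [h]; exact hμ.1 _
      · rw [hanti]; rw [hall j i h, neg_zero]
    exact hne (bilin_eq_zero_of_basis b.toBasis μ (by simpa using hzero))
  -- lower bound: every element of S is ≥ 1
  have hSbd : ∀ x ∈ S, (1:ℝ) ≤ x := by
    rintro x ⟨i, j, k, hij, hk, rfl⟩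
    have hj : (j : ℕ) ≠ n - 1 := by
      intro h
      apply hk
      have hbj : b j = b nlast := by congr 1; exact Fin.ext h
      rw [hanti, hbj, hcentral, neg_zero, inner_zero_left]
    have hi : (i : ℕ) ≠ n - 1 := by
      have h1 : (i : ℕ) < (j : ℕ) := hij
      have h2 : (j : ℕ) < n := j.isLt
      omega
    rw [hl i, hl j, if_neg hi, if_neg hj]
    have := hlb k
    linarith
  have hinf : (1:ℝ) ≤ sInf S := le_csInf hSne hSbd
  refine ⟨htr, hnotder, ?_, ?_⟩
  · show -sInf S ≤ -1
    linarith
  · show -sInf S < 0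
    linarith

end
end
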